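/- Let A and B be nontrivial groups and identify A and B with their images in the free product A ∗ B. Then for every g ∈ A ∗ B, if the intersection A ∩ gAg⁻¹ is nontrivial, then g ∈ A. In particular, the normalizer of A in A ∗ B equals A (A is a malnormal subgroup of A ∗ B). -/

import Mathlib

open Monoid CoprodI

section Aux

variable {ι : Type*} {G : ι → Type*} [∀ i, Group (G i)]

private lemma word_prod_inj [DecidableEq ι] [∀ i, DecidableEq (G i)]
    {w₁ w₂ : Word G} (h : w₁.prod = w₂.prod) : w₁ = w₂ := by
  have h1 : Word.equiv w₁.prod = w₁ := Word.equiv.right_inv w₁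
  have h2 : Word.equiv w₂.prod = w₂ := Word.equiv.right_inv w₂
  rw [← h1, ← h2, h]

private lemma conj_neword_ne_of [DecidableEq ι] [∀ i, DecidableEq (G i)]
    {i j k : ι} (hjk : j ≠ k) (v : NeWord G i j)
    {a : G k} (ha : a ≠ 1) (c : G k) :
    v.prod * of a * v.prod⁻¹ ≠ of c := by
  intro heq
  have hc : c ≠ 1 := by
    rintro rfl
    rw [map_one] at heq
    have h1 : of a = v.prod⁻¹ * (v.prod * of a * v.prod⁻¹) * v.prod := by group
    rw [heq] at h1
    simp only [mul_one, inv_mul_cancel] at h1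
    exact ha (CoprodI.of_injective k (by simpa using h1))
  set w2 : NeWord G i i :=
    (v.append hjk (NeWord.singleton a ha)).append hjk.symm v.inv with hw2
  have hprod : w2.prod = v.prod * of a * v.prod⁻¹ := by
    simp [hw2, NeWord.append_prod, NeWord.prod_singleton, NeWord.inv_prod, mul_assoc]
  have hprod2 : w2.toWord.prod = (NeWord.singleton c hc).toWord.prod := by
    show w2.prod = (NeWord.singleton c hc).prod
    rw [hprod, NeWord.prod_singleton, heq]
  have hwords := word_prod_inj hprod2
  have hlists : w2.toList = [⟨k, c⟩] := congrArg Word.toList hwords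
  have h1 := v.toList_ne_nil
  have h2 := v.inv.toList_ne_nil
  have hlen := congrArg List.length hlists
  simp only [hw2, NeWord.toList, List.length_append, List.length_singleton] at hlen
  rw [← List.length_pos_iff_ne_nil] at h1 h2
  omega

private lemma mem_range_of_conj [DecidableEq ι] [∀ i, DecidableEq (G i)]
    {k : ι} {g : CoprodI G} {a : G k} (ha : a ≠ 1)
    (h : g * of a * g⁻¹ ∈ (of : G k →* CoprodI G).range) :
    g ∈ (of : G k →* CoprodI G).range := by
  obtain ⟨c, hc⟩ := h
  set w : Word G := Word.equiv g⁻¹ with hw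
  set p := Word.equivPair k w with hp
  have hdecomp : g⁻¹ = of p.head * p.tail.prod := by
    have h1 : Word.prod w = g⁻¹ := Word.equiv.left_inv g⁻¹
    have h2 := Word.equivPair_head_smul_equivPair_tail (i := k) w
    calc g⁻¹ = Word.prod w := h1.symm
      _ = Word.prod (of p.head • p.tail) := by rw [hp, h2]
      _ = of p.head * p.tail.prod := Word.prod_smul _ _
  rcases eq_or_ne p.tail Word.empty with hempty | hne
  · refine ⟨p.head⁻¹, ?_⟩
    rw [map_inv]
    rw [hempty, Word.prod_empty, mul_one] at hdecomp
    rw [← hdecomp, inv_inv]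
  · obtain ⟨i, j, v, hv⟩ := NeWord.of_word p.tail hne
    have hik : i ≠ k := by
      intro hik
      apply p.fstIdx_ne
      subst hik
      have := v.toList_head?
      rw [show v.toList = p.tail.toList from congrArg Word.toList hv] at this
      simp [Word.fstIdx, this]
    have hvp : v.prod = p.tail.prod := by
      show v.toWord.prod = p.tail.prod
      rw [hv]
    have ha'' : p.head⁻¹ * a * p.head ≠ 1 := by
      intro h1
      apply ha
      have := congrArg (fun x => p.head * x * p.head⁻¹) h1
      simpa [mul_assoc] using this
    have key := conj_neword_ne_of (i := j) (j := i) (k := k) hik v.inv ha'' c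
    exfalso
    apply key
    have hg : g = v.prod⁻¹ * (of p.head)⁻¹ := by
      rw [hvp, ← mul_inv_rev, ← hdecomp, inv_inv]
    rw [NeWord.inv_prod, inv_inv, hc, hg]
    simp only [map_mul, map_inv]
    group

end Aux

section Main

variable {A : Type u} {B : Type v} [Group A] [Group B]

private def G2 (A : Type u) (B : Type v) : Bool → Type (max u v) :=
  fun b => cond b (ULift A) (ULift B)

private instance : ∀ b, Group (G2 A B b) := fun b => by
  cases b
  · exact inferInstanceAs (Group (ULift B))
  · exact inferInstanceAs (Group (ULift A))

private def toCI : Coprod A B →* CoprodI (G2 A B) :=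
  Coprod.lift
    ((of (M := G2 A B) (i := true)).comp (MulEquiv.ulift.symm.toMonoidHom : A →* ULift A))
    ((of (M := G2 A B) (i := false)).comp (MulEquiv.ulift.symm.toMonoidHom : B →* ULift B))

private def fromCI : CoprodI (G2 A B) →* Coprod A B :=
  CoprodI.lift fun b =>
    Bool.rec (motive := fun b => G2 A B b →* Coprod A B)
      ((Coprod.inr : B →* Coprod A B).comp (MulEquiv.ulift.toMonoidHom : ULift B →* B))
      ((Coprod.inl : A →* Coprod A B).comp (MulEquiv.ulift.toMonoidHom : ULift A →* A)) b

private lemma toCI_inl (a : A) :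
    toCI (Coprod.inl a) = of (M := G2 A B) (i := true) (ULift.up a) :=
  Coprod.lift_apply_inl _ _ a

private lemma fromCI_of (a : G2 A B true) : fromCI (of a) = Coprod.inl a.down :=
  CoprodI.lift_of _ (i := true) a

private lemma fromCI_toCI (x : Coprod A B) : fromCI (toCI x) = x := by
  have : (fromCI.comp (toCI : Coprod A B →* CoprodI (G2 A B))) = MonoidHom.id _ := by
    apply Coprod.hom_ext <;> ext x <;>
      simp [toCI, fromCI, Coprod.lift_apply_inl, Coprod.lift_apply_inr, CoprodI.lift_of] <;>
      rfl
  exact DFunLike.congr_fun this x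

private lemma coprod_inl_mal (g : Coprod A B)
    (h : (Coprod.inl : A →* Coprod A B).range ⊓
        Subgroup.map (MulAut.conj g).toMonoidHom (Coprod.inl : A →* Coprod A B).range ≠ ⊥) :
    g ∈ (Coprod.inl : A →* Coprod A B).range := by
  classical
  obtain ⟨⟨x, hx⟩, hx1⟩ := Subgroup.ne_bot_iff_exists_ne_one.mp h
  have hxne : x ≠ 1 := fun hh => hx1 (Subtype.ext hh)
  obtain ⟨⟨a, ha⟩, y, ⟨a', rfl⟩, hy⟩ := hx
  simp only [MulEquiv.coe_toMonoidHom, MulAut.conj_apply] at hy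
  have ha' : a' ≠ 1 := by
    rintro rfl
    apply hxne
    rw [← hy]
    simp
  have h2 : Coprod.inl a = g * Coprod.inl a' * g⁻¹ := by rw [ha, ← hy]
  have hconj : toCI g * of (M := G2 A B) (i := true) (ULift.up a') * (toCI g)⁻¹ ∈
      (of : G2 A B true →* CoprodI (G2 A B)).range := by
    refine ⟨ULift.up a, ?_⟩
    calc of (M := G2 A B) (i := true) (ULift.up a)
        = toCI (Coprod.inl a) := (toCI_inl a).symm
      _ = toCI g * of (M := G2 A B) (i := true) (ULift.up a') * (toCI g)⁻¹ := by
          rw [h2, map_mul, map_mul, map_inv, toCI_inl]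
  have ha'' : (ULift.up a' : ULift A) ≠ 1 := fun hh => ha' (congrArg ULift.down hh)
  obtain ⟨c, hc⟩ := mem_range_of_conj (ha := ha'') hconj
  refine ⟨c.down, ?_⟩
  rw [← fromCI_toCI g, ← hc, fromCI_of]

end Main



/-- In a free product `A ∗ B` of nontrivial groups, `A` is malnormal: `A ∩ gAg⁻¹` is nontrivial
only when `g ∈ A`; in particular the normalizer of `A` is `A`. -/
theorem freeProduct_inl_malnormal {A B : Type*} [Group A] [Group B]
    [Nontrivial A] [Nontrivial B] :
    (∀ g : Monoid.Coprod A B,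
        (Monoid.Coprod.inl : A →* Monoid.Coprod A B).range ⊓
            Subgroup.map (MulAut.conj g).toMonoidHom
              (Monoid.Coprod.inl : A →* Monoid.Coprod A B).range ≠ ⊥ →
          g ∈ (Monoid.Coprod.inl : A →* Monoid.Coprod A B).range) ∧
      Subgroup.normalizer ((Monoid.Coprod.inl : A →* Monoid.Coprod A B).range : Set (Monoid.Coprod A B)) =
        (Monoid.Coprod.inl : A →* Monoid.Coprod A B).range := by
  refine ⟨fun g => coprod_inl_mal g, ?_⟩
  apply le_antisymm
  · intro g hg
    apply coprod_inl_mal g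
    rw [Subgroup.ne_bot_iff_exists_ne_one]
    obtain ⟨a, ha⟩ := exists_ne (1 : A)
    have hmem : g⁻¹ * Coprod.inl a * g ∈ (Coprod.inl : A →* Coprod A B).range := by
      have := ((Subgroup.mem_normalizer_iff (H := (Coprod.inl : A →* Coprod A B).range)).mp (Subgroup.inv_mem _ hg) (Coprod.inl a)).mp
        ⟨a, rfl⟩
      simpa using this
    refine ⟨⟨Coprod.inl a, ⟨a, rfl⟩, ?_⟩, ?_⟩
    · refine ⟨g⁻¹ * Coprod.inl a * g, hmem, ?_⟩
      simp [mul_assoc]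
    · intro h
      rw [Subtype.ext_iff] at h
      exact ha (Coprod.inl_injective (h.trans (map_one Coprod.inl).symm))
  · exact Subgroup.le_normalizer
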